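/- Let k ≥ 1 and let A be a 4k×4k antisymmetric matrix whose rows/columns are grouped into 2k consecutive pairs indexed by B = {1,…,2k}. Let Y_{2k}(1) be the block-diagonal antisymmetric matrix with 2k diagonal 2×2 blocks equal to [[0,1],[−1,0]]. For I ⊆ B, let A_I denote the principal submatrix of A consisting of the row/column pairs indexed by I (with Pf(A_∅) = 1). Then Pf(Y_{2k}(1) + A) = Σ_{I ⊆ B} Pf(A_I). -/

import Mathlib

/-- The Pfaffian of a `2n × 2n` real matrix, defined by the sum-over-permutations
formula `Pf(A) = (1/(2^n n!)) ∑_σ sgn(σ) ∏_i A(σ(2i), σ(2i+1))`. -/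
noncomputable def pfaffian {n : ℕ} (A : Matrix (Fin (2 * n)) (Fin (2 * n)) ℝ) : ℝ :=
  (1 / ((2 : ℝ) ^ n * n.factorial)) *
    ∑ σ : Equiv.Perm (Fin (2 * n)), (Equiv.Perm.sign σ : ℝ) *
      ∏ i : Fin n, A (σ ⟨2 * i.val, by have := i.isLt; omega⟩)
        (σ ⟨2 * i.val + 1, by have := i.isLt; omega⟩)

/-- The block-diagonal antisymmetric matrix `Y_{2k}(1)` with `2k` diagonal
`2 × 2` blocks `[[0, 1], [-1, 0]]`. -/
def Yblock (k : ℕ) : Matrix (Fin (2 * (2 * k))) (Fin (2 * (2 * k))) ℝ :=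
  fun i j =>
    if i.val % 2 = 0 ∧ j.val = i.val + 1 then 1
    else if j.val % 2 = 0 ∧ i.val = j.val + 1 then -1 else 0

/-- The embedding of the rows/columns of the principal submatrix `A_I`, consisting of
the row/column pairs `{2i, 2i+1}` for `i ∈ I` (taken in increasing order). -/
def pairEmb {k : ℕ} (I : Finset (Fin (2 * k))) (i : Fin (2 * I.card)) :
    Fin (2 * (2 * k)) :=
  ⟨2 * ((I.orderIsoOfFin rfl ⟨i.val / 2, by have := i.isLt; omega⟩).1).val + i.val % 2, by
    have h1 := ((I.orderIsoOfFin rfl ⟨i.val / 2, by have := i.isLt; omega⟩).1).isLt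
    omega⟩
open Finset Equiv Equiv.Perm

section Aux
variable {k : ℕ}

def half {n : ℕ} (x : Fin (2*n)) : Fin n := ⟨x.val/2, by have := x.isLt; omega⟩

def elt (T : Finset (Fin (2*k))) (j : Fin T.card) : Fin (2*k) := (T.orderIsoOfFin rfl j).1

lemma elt_mem (T : Finset (Fin (2*k))) (j : Fin T.card) : elt T j ∈ T := (T.orderIsoOfFin rfl j).2

lemma elt_injective (T : Finset (Fin (2*k))) : Function.Injective (elt T) := by
  intro a b h
  exact (T.orderIsoOfFin rfl).injective (Subtype.ext h)
lemma pairEmb_val (T : Finset (Fin (2*k))) (x : Fin (2*T.card)) :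
    (pairEmb T x).val = 2 * (elt T (half x)).val + x.val % 2 := rfl

lemma pairEmb_injective (T : Finset (Fin (2*k))) : Function.Injective (pairEmb T) := by
  intro x y h
  have h' := congrArg Fin.val h
  rw [pairEmb_val, pairEmb_val] at h'
  have hx2 := Nat.mod_lt x.val (y := 2) (by omega)
  have hy2 := Nat.mod_lt y.val (y := 2) (by omega)
  have he : (elt T (half x)).val = (elt T (half y)).val ∧ x.val % 2 = y.val % 2 := by
    constructor <;> omega
  have h3 := elt_injective T (Fin.ext he.1)
  have hdiv : x.val / 2 = y.val / 2 := congrArg Fin.val h3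
  exact Fin.ext (by omega)

lemma card_compl_pair (T : Finset (Fin (2*k))) : T.card + Tᶜ.card = 2*k := by
  rw [Finset.card_add_card_compl]; simp

lemma half_pairEmb (T : Finset (Fin (2*k))) (x : Fin (2*T.card)) :
    half (pairEmb T x) = elt T (half x) := by
  apply Fin.ext
  show (pairEmb T x).val / 2 = _
  rw [pairEmb_val]; omega

lemma half_pairEmb_mem (T : Finset (Fin (2*k))) (x : Fin (2*T.card)) :
    half (pairEmb T x) ∈ T := by rw [half_pairEmb]; exact elt_mem T _

def sumEmb (T : Finset (Fin (2*k))) :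
    Fin (2*T.card) ⊕ Fin (2*Tᶜ.card) → Fin (2*(2*k)) :=
  Sum.elim (pairEmb T) (pairEmb Tᶜ)

lemma sumEmb_injective (T : Finset (Fin (2*k))) : Function.Injective (sumEmb T) := by
  intro u v h
  match u, v with
  | .inl x, .inl y => exact congrArg Sum.inl (pairEmb_injective T h)
  | .inr x, .inr y => exact congrArg Sum.inr (pairEmb_injective Tᶜ h)
  | .inl x, .inr y =>
    exfalso
    have hmem := half_pairEmb_mem T x
    have hmem' := half_pairEmb_mem Tᶜ y
    rw [show pairEmb T x = pairEmb Tᶜ y from h] at hmem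
    exact (Finset.mem_compl.mp hmem') hmem
  | .inr x, .inl y =>
    exfalso
    have hmem := half_pairEmb_mem Tᶜ x
    have hmem' := half_pairEmb_mem T y
    rw [show pairEmb Tᶜ x = pairEmb T y from h] at hmem
    exact (Finset.mem_compl.mp hmem) hmem'

lemma sumEmb_bijective (T : Finset (Fin (2*k))) : Function.Bijective (sumEmb T) := by
  rw [Fintype.bijective_iff_injective_and_card]
  refine ⟨sumEmb_injective T, ?_⟩
  simp only [Fintype.card_sum, Fintype.card_fin]
  have := card_compl_pair T
  omega

noncomputable def ET (T : Finset (Fin (2*k))) :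
    (Fin (2*T.card) ⊕ Fin (2*Tᶜ.card)) ≃ Fin (2*(2*k)) :=
  Equiv.ofBijective (sumEmb T) (sumEmb_bijective T)

lemma ET_inl (T : Finset (Fin (2*k))) (x : Fin (2*T.card)) : ET T (.inl x) = pairEmb T x := rfl
lemma ET_inr (T : Finset (Fin (2*k))) (x : Fin (2*Tᶜ.card)) : ET T (.inr x) = pairEmb Tᶜ x := rfl

def pairEquiv (m : ℕ) : Fin m × Fin 2 ≃ Fin (2*m) where
  toFun p := ⟨2*p.1.val + p.2.val, by have := p.1.isLt; have := p.2.isLt; omega⟩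
  invFun x := (⟨x.val/2, by have := x.isLt; omega⟩, ⟨x.val % 2, by omega⟩)
  left_inv p := by ext <;> simp <;> omega
  right_inv x := by ext; simp; omega

def pairLift {m : ℕ} (h : Equiv.Perm (Fin m)) : Equiv.Perm (Fin (2*m)) :=
  (pairEquiv m).permCongr (h.prodCongr (Equiv.refl (Fin 2)))

lemma pairLift_val {m : ℕ} (h : Equiv.Perm (Fin m)) (x : Fin (2*m)) :
    (pairLift h x).val = 2 * (h (half x)).val + x.val % 2 := rfl

lemma sign_pairLift {m : ℕ} (h : Equiv.Perm (Fin m)) : Equiv.Perm.sign (pairLift h) = 1 := by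
  unfold pairLift
  rw [Equiv.Perm.sign_permCongr]
  have : h.prodCongr (Equiv.refl (Fin 2)) = Equiv.prodCongrLeft (fun _ : Fin 2 => h) := by
    ext p <;> rfl
  rw [this, Equiv.Perm.sign_prodCongrLeft]
  simp [Int.units_mul_self]

def flipE (c : Bool) : Equiv.Perm (Fin 2) := if c then Equiv.swap 0 1 else Equiv.refl _

lemma flipE_val : ∀ (c : Bool) (r : Fin 2), ((flipE c) r).val = if c then 1 - r.val else r.val := by
  decide

lemma sign_flipE (c : Bool) : Equiv.Perm.sign (flipE c) = if c then -1 else 1 := by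
  cases c <;> simp [flipE]

def midPerm {m : ℕ} (π : Equiv.Perm (Fin m)) (ε : Fin m → Bool) : Equiv.Perm (Fin (2*m)) :=
  (pairEquiv m).permCongr
    ((π.prodCongr (Equiv.refl (Fin 2))) * (Equiv.prodCongrRight fun i => flipE (ε i)))

lemma midPerm_val {m : ℕ} (π : Equiv.Perm (Fin m)) (ε : Fin m → Bool) (x : Fin (2*m)) :
    (midPerm π ε x).val = 2 * (π (half x)).val
      + (if ε (half x) then 1 - x.val % 2 else x.val % 2) := by
  have h : (midPerm π ε x).val = 2 * (π (half x)).val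
      + ((flipE (ε (half x))) ⟨x.val % 2, by omega⟩).val := rfl
  rw [h, flipE_val]

lemma sign_midPerm {m : ℕ} (π : Equiv.Perm (Fin m)) (ε : Fin m → Bool) :
    Equiv.Perm.sign (midPerm π ε) = ∏ j : Fin m, (if ε j then (-1 : ℤˣ) else 1) := by
  unfold midPerm
  rw [Equiv.Perm.sign_permCongr, map_mul]
  have h1 : Equiv.Perm.sign (π.prodCongr (Equiv.refl (Fin 2))) = 1 := by
    have h2 : π.prodCongr (Equiv.refl (Fin 2)) = Equiv.prodCongrLeft (fun _ : Fin 2 => π) := by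
      ext p <;> rfl
    rw [h2, Equiv.Perm.sign_prodCongrLeft]; simp [Int.units_mul_self]
  rw [h1, one_mul, Equiv.Perm.sign_prodCongrRight]
  exact Finset.prod_congr rfl fun j _ => by rw [sign_flipE]
-- base-level sum embedding
def sumEmb0 (T : Finset (Fin (2*k))) : Fin T.card ⊕ Fin Tᶜ.card → Fin (2*k) :=
  Sum.elim (elt T) (elt Tᶜ)

lemma sumEmb0_injective (T : Finset (Fin (2*k))) : Function.Injective (sumEmb0 T) := by
  intro u v h
  match u, v with
  | .inl x, .inl y => exact congrArg Sum.inl (elt_injective T h)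
  | .inr x, .inr y => exact congrArg Sum.inr (elt_injective Tᶜ h)
  | .inl x, .inr y =>
    exfalso
    have h1 := elt_mem T x; have h2 := elt_mem Tᶜ y
    rw [show elt T x = elt Tᶜ y from h] at h1
    exact (Finset.mem_compl.mp h2) h1
  | .inr x, .inl y =>
    exfalso
    have h1 := elt_mem Tᶜ x; have h2 := elt_mem T y
    rw [show elt Tᶜ x = elt T y from h] at h1
    exact (Finset.mem_compl.mp h1) h2

lemma sumEmb0_bijective (T : Finset (Fin (2*k))) : Function.Bijective (sumEmb0 T) := by
  rw [Fintype.bijective_iff_injective_and_card]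
  refine ⟨sumEmb0_injective T, ?_⟩
  simp only [Fintype.card_sum, Fintype.card_fin]
  exact card_compl_pair T

noncomputable def E0 (T : Finset (Fin (2*k))) : (Fin T.card ⊕ Fin Tᶜ.card) ≃ Fin (2*k) :=
  Equiv.ofBijective (sumEmb0 T) (sumEmb0_bijective T)

section build
variable (S J : Finset (Fin (2*k))) (hJS : J.card = S.card)

lemma compl_card_eq (h : J.card = S.card) : Jᶜ.card = Sᶜ.card := by
  have := card_compl_pair S; have := card_compl_pair J; omega

/-- the cast between the two sum types -/
def sumCast : (Fin (2*S.card) ⊕ Fin (2*Sᶜ.card)) ≃ (Fin (2*J.card) ⊕ Fin (2*Jᶜ.card)) :=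
  Equiv.sumCongr (finCongr (by rw [hJS])) (finCongr (by rw [compl_card_eq S J hJS]))

def sumCast0 : (Fin S.card ⊕ Fin Sᶜ.card) ≃ (Fin J.card ⊕ Fin Jᶜ.card) :=
  Equiv.sumCongr (finCongr (by rw [hJS])) (finCongr (by rw [compl_card_eq S J hJS]))

/-- the order-preserving pair relabeling from pairs of S,Sᶜ to pairs of J,Jᶜ -/
lemma ET_symm_left (T : Finset (Fin (2*k))) (x : Fin (2*T.card)) :
    (ET T).symm (pairEmb T x) = .inl x := by
  rw [← ET_inl, Equiv.symm_apply_apply]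

lemma ET_symm_right (T : Finset (Fin (2*k))) (x : Fin (2*Tᶜ.card)) :
    (ET T).symm (pairEmb Tᶜ x) = .inr x := by
  rw [← ET_inr, Equiv.symm_apply_apply]

noncomputable def shuffle : Equiv.Perm (Fin (2*(2*k))) :=
  (ET S).symm.trans ((sumCast S J hJS).trans (ET J))

noncomputable def shuffle0 : Equiv.Perm (Fin (2*k)) :=
  (E0 S).symm.trans ((sumCast0 S J hJS).trans (E0 J))

lemma shuffle_eq_pairLift : shuffle S J hJS = pairLift (shuffle0 S J hJS) := by
  apply Equiv.ext
  intro y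
  obtain ⟨v, rfl⟩ := (ET S).surjective y
  apply Fin.ext
  match v with
  | .inl x =>
    have h1 : shuffle S J hJS (ET S (.inl x)) = pairEmb J (finCongr (by rw [hJS]) x) := by
      simp [shuffle, sumCast, ET_symm_left, ET_inl]
    rw [h1, ET_inl, pairLift_val, half_pairEmb]
    have h2 : shuffle0 S J hJS (elt S (half x)) = elt J (finCongr (by rw [hJS]) (half x)) := by
      have : elt S (half x) = E0 S (.inl (half x)) := rfl
      simp [this, shuffle0, sumCast0]
      rfl
    rw [h2, pairEmb_val]
    have : (half (finCongr (by rw [hJS] : 2*S.card = 2*J.card) x)) =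
        finCongr (by rw [hJS] : S.card = J.card) (half x) := by
      apply Fin.ext; simp [half]
    rw [this]
    simp [pairEmb_val]
  | .inr x =>
    have h1 : shuffle S J hJS (ET S (.inr x)) = pairEmb Jᶜ (finCongr (by rw [compl_card_eq S J hJS]) x) := by
      simp [shuffle, sumCast, ET_symm_right, ET_inr]
    rw [h1, ET_inr, pairLift_val, half_pairEmb]
    have h2 : shuffle0 S J hJS (elt Sᶜ (half x)) = elt Jᶜ (finCongr (by rw [compl_card_eq S J hJS]) (half x)) := by
      have : elt Sᶜ (half x) = E0 S (.inr (half x)) := rfl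
      simp [this, shuffle0, sumCast0]
      rfl
    rw [h2, pairEmb_val]
    have : (half (finCongr (by rw [compl_card_eq S J hJS] : 2*Sᶜ.card = 2*Jᶜ.card) x)) =
        finCongr (by rw [compl_card_eq S J hJS] : Sᶜ.card = Jᶜ.card) (half x) := by
      apply Fin.ext; simp [half]
    rw [this]
    simp [pairEmb_val]

lemma sign_shuffle : Equiv.Perm.sign (shuffle S J hJS) = 1 := by
  rw [shuffle_eq_pairLift]; exact sign_pairLift _

variable {m' : ℕ}

/-- The permutation associated to the data `(J, π, ε, b)`. -/
noncomputable def buildPerm (π : Equiv.Perm (Fin S.card)) (ε : Fin S.card → Bool)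
    (b : Equiv.Perm (Fin (2*Sᶜ.card))) : Equiv.Perm (Fin (2*(2*k))) :=
  (ET S).symm.trans ((Equiv.sumCongr (midPerm π ε) b).trans ((sumCast S J hJS).trans (ET J)))

lemma buildPerm_left (π : Equiv.Perm (Fin S.card)) (ε : Fin S.card → Bool)
    (b : Equiv.Perm (Fin (2*Sᶜ.card))) (x : Fin (2*S.card)) :
    buildPerm S J hJS π ε b (pairEmb S x)
      = pairEmb J (finCongr (by rw [hJS]) (midPerm π ε x)) := by
  simp [buildPerm, sumCast, ET_symm_left, ET_inl]

lemma buildPerm_right (π : Equiv.Perm (Fin S.card)) (ε : Fin S.card → Bool)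
    (b : Equiv.Perm (Fin (2*Sᶜ.card))) (x : Fin (2*Sᶜ.card)) :
    buildPerm S J hJS π ε b (pairEmb Sᶜ x)
      = pairEmb Jᶜ (finCongr (by rw [compl_card_eq S J hJS]) (b x)) := by
  simp [buildPerm, sumCast, ET_symm_right, ET_inr]

lemma sign_buildPerm (π : Equiv.Perm (Fin S.card)) (ε : Fin S.card → Bool)
    (b : Equiv.Perm (Fin (2*Sᶜ.card))) :
    Equiv.Perm.sign (buildPerm S J hJS π ε b)
      = (∏ j : Fin S.card, (if ε j then (-1 : ℤˣ) else 1)) * Equiv.Perm.sign b := by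
  have hdec : buildPerm S J hJS π ε b
      = (shuffle S J hJS) * ((ET S).permCongr (Equiv.sumCongr (midPerm π ε) b)) := by
    apply Equiv.ext; intro y
    simp [buildPerm, shuffle, Equiv.permCongr_apply, Equiv.Perm.mul_apply]
  rw [hdec, map_mul, sign_shuffle, one_mul, Equiv.Perm.sign_permCongr,
    Equiv.Perm.sign_sumCongr, sign_midPerm]
end build
end Aux
section Stage5
variable {k : ℕ}

def dbl {n : ℕ} (i : Fin n) : Fin (2*n) := ⟨2*i.val, by have := i.isLt; omega⟩
def dbl1 {n : ℕ} (i : Fin n) : Fin (2*n) := ⟨2*i.val+1, by have := i.isLt; omega⟩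

lemma half_dbl {n : ℕ} (i : Fin n) : half (dbl i) = i := by
  apply Fin.ext; show (2*i.val)/2 = i.val; omega
lemma half_dbl1 {n : ℕ} (i : Fin n) : half (dbl1 i) = i := by
  apply Fin.ext; show (2*i.val+1)/2 = i.val; omega

lemma dbl_elt (T : Finset (Fin (2*k))) (j : Fin T.card) :
    dbl (elt T j) = pairEmb T (dbl j) := by
  apply Fin.ext
  rw [pairEmb_val, half_dbl]
  show 2 * (elt T j).val = 2 * (elt T j).val + (2*j.val) % 2
  omega

lemma dbl1_elt (T : Finset (Fin (2*k))) (j : Fin T.card) :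
    dbl1 (elt T j) = pairEmb T (dbl1 j) := by
  apply Fin.ext
  rw [pairEmb_val, half_dbl1]
  show 2 * (elt T j).val + 1 = 2 * (elt T j).val + (2*j.val+1) % 2
  omega

lemma Yblock_eq_zero {x y : Fin (2*(2*k))} (h : ¬(x.val/2 = y.val/2 ∧ x.val ≠ y.val)) :
    Yblock k x y = 0 := by
  unfold Yblock
  rw [if_neg, if_neg] <;> rintro ⟨h1, h2⟩ <;> exact h ⟨by omega, by omega⟩

lemma Yblock_pairEmb (T : Finset (Fin (2*k))) (u v : Fin (2*T.card))
    (hu : u.val/2 = v.val/2) (hne : u.val ≠ v.val) :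
    Yblock k (pairEmb T u) (pairEmb T v) = if u.val % 2 = 0 then 1 else -1 := by
  have h1 : (pairEmb T u).val = 2 * (elt T (half u)).val + u.val % 2 := pairEmb_val T u
  have h2 : (pairEmb T v).val = 2 * (elt T (half v)).val + v.val % 2 := pairEmb_val T v
  have he : half u = half v := Fin.ext hu
  rw [he] at h1
  unfold Yblock
  by_cases hu0 : u.val % 2 = 0
  · rw [if_pos ⟨by omega, by omega⟩, if_pos hu0]
  · rw [if_neg (by omega), if_pos ⟨by omega, by omega⟩, if_neg hu0]

lemma prod_over_finset {M : Type*} [CommMonoid M] (T : Finset (Fin (2*k))) (f : Fin (2*k) → M) :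
    ∏ i ∈ T, f i = ∏ j : Fin T.card, f (elt T j) := by
  refine (Finset.prod_bij (fun j _ => elt T j) (fun j _ => elt_mem T j)
    (fun a _ b _ h => elt_injective T h) ?_ (fun j _ => rfl)).symm
  intro b hb
  refine ⟨(T.orderIsoOfFin rfl).symm ⟨b, hb⟩, Finset.mem_univ _, ?_⟩
  show ((T.orderIsoOfFin rfl) ((T.orderIsoOfFin rfl).symm ⟨b, hb⟩)).1 = b
  rw [OrderIso.apply_symm_apply]

end Stage5
section Stage6
variable {k : ℕ} (S J : Finset (Fin (2*k))) (hJS : J.card = S.card)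
variable (π : Equiv.Perm (Fin S.card)) (ε : Fin S.card → Bool) (b : Equiv.Perm (Fin (2*Sᶜ.card)))

lemma midPerm_dbl_val (j : Fin S.card) :
    (midPerm π ε (dbl j)).val = 2 * (π j).val + (if ε j then 1 else 0) := by
  rw [midPerm_val, half_dbl]
  have : (dbl j).val % 2 = 0 := by show (2*j.val) % 2 = 0; omega
  rw [this]

lemma midPerm_dbl1_val (j : Fin S.card) :
    (midPerm π ε (dbl1 j)).val = 2 * (π j).val + (if ε j then 0 else 1) := by
  rw [midPerm_val, half_dbl1]
  have : (dbl1 j).val % 2 = 1 := by show (2*j.val+1) % 2 = 1; omega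
  rw [this]

lemma Yprod_build :
    ∏ i ∈ S, Yblock k (buildPerm S J hJS π ε b (dbl i)) (buildPerm S J hJS π ε b (dbl1 i))
      = ∏ j : Fin S.card, (if ε j then (-1 : ℝ) else 1) := by
  rw [prod_over_finset]
  refine Finset.prod_congr rfl fun j _ => ?_
  rw [dbl_elt, dbl1_elt, buildPerm_left, buildPerm_left]
  set u := finCongr (by rw [hJS] : 2*S.card = 2*J.card) (midPerm π ε (dbl j)) with hu
  set v := finCongr (by rw [hJS] : 2*S.card = 2*J.card) (midPerm π ε (dbl1 j)) with hv
  have huv : u.val = 2 * (π j).val + (if ε j then 1 else 0) := midPerm_dbl_val S π ε j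
  have hvv : v.val = 2 * (π j).val + (if ε j then 0 else 1) := midPerm_dbl1_val S π ε j
  rw [Yblock_pairEmb J u v (by by_cases h : ε j <;> simp [h] at huv hvv ⊢ <;> omega)
    (by by_cases h : ε j <;> simp [h] at huv hvv ⊢ <;> omega)]
  by_cases h : ε j <;> simp [h] at huv ⊢ <;> omega

lemma Aprod_build (A : Matrix (Fin (2*(2*k))) (Fin (2*(2*k))) ℝ) :
    ∏ i ∈ Sᶜ, A (buildPerm S J hJS π ε b (dbl i)) (buildPerm S J hJS π ε b (dbl1 i))
      = ∏ j : Fin Sᶜ.card,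
          A (pairEmb Jᶜ (finCongr (by rw [compl_card_eq S J hJS]) (b (dbl j))))
            (pairEmb Jᶜ (finCongr (by rw [compl_card_eq S J hJS]) (b (dbl1 j)))) := by
  rw [prod_over_finset]
  refine Finset.prod_congr rfl fun j _ => ?_
  rw [dbl_elt, dbl1_elt, buildPerm_right, buildPerm_right]

lemma prod_sq_one : (∏ j : Fin S.card, (if ε j then (-1 : ℝ) else 1))
    * (∏ j : Fin S.card, (if ε j then (-1 : ℝ) else 1)) = 1 := by
  rw [← Finset.prod_mul_distrib]
  apply Finset.prod_eq_one
  intro j _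
  by_cases h : ε j <;> simp [h]

lemma sign_cast : ((( Equiv.Perm.sign (buildPerm S J hJS π ε b) : ℤˣ) : ℤ) : ℝ)
    = (∏ j : Fin S.card, (if ε j then (-1 : ℝ) else 1)) * ((Equiv.Perm.sign b : ℤ) : ℝ) := by
  rw [sign_buildPerm]
  push_cast
  congr 1
  refine Finset.prod_congr rfl fun j _ => ?_
  by_cases h : ε j <;> simp [h]

lemma term_build (A : Matrix (Fin (2*(2*k))) (Fin (2*(2*k))) ℝ) :
    ((Equiv.Perm.sign (buildPerm S J hJS π ε b) : ℤ) : ℝ)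
      * ((∏ i ∈ S, Yblock k (buildPerm S J hJS π ε b (dbl i)) (buildPerm S J hJS π ε b (dbl1 i)))
        * ∏ i ∈ Sᶜ, A (buildPerm S J hJS π ε b (dbl i)) (buildPerm S J hJS π ε b (dbl1 i)))
    = ((Equiv.Perm.sign b : ℤ) : ℝ)
      * ∏ j : Fin Sᶜ.card,
          A (pairEmb Jᶜ (finCongr (by rw [compl_card_eq S J hJS]) (b (dbl j))))
            (pairEmb Jᶜ (finCongr (by rw [compl_card_eq S J hJS]) (b (dbl1 j)))) := by
  rw [sign_cast, Yprod_build, Aprod_build, mul_mul_mul_comm, prod_sq_one, one_mul]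

end Stage6
section Stage7
variable {k : ℕ}

def idxOf (T : Finset (Fin (2*k))) (u : Fin (2*k)) (hu : u ∈ T) : Fin T.card :=
  (T.orderIsoOfFin rfl).symm ⟨u, hu⟩

lemma elt_idxOf (T : Finset (Fin (2*k))) (u : Fin (2*k)) (hu : u ∈ T) :
    elt T (idxOf T u hu) = u := by
  show ((T.orderIsoOfFin rfl) ((T.orderIsoOfFin rfl).symm ⟨u, hu⟩)).1 = u
  rw [OrderIso.apply_symm_apply]

lemma idxOf_elt (T : Finset (Fin (2*k))) (j : Fin T.card) :
    idxOf T (elt T j) (elt_mem T j) = j := by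
  show (T.orderIsoOfFin rfl).symm ⟨(T.orderIsoOfFin rfl j).1, _⟩ = j
  rw [show (⟨(T.orderIsoOfFin rfl j).1, _⟩ : {x // x ∈ T}) = T.orderIsoOfFin rfl j from rfl,
    OrderIso.symm_apply_apply]

/-- `σ` maps each slot-pair of `S` into some matrix pair. -/
def PairOK (S : Finset (Fin (2*k))) (σ : Equiv.Perm (Fin (2*(2*k)))) : Prop :=
  ∀ i ∈ S, (σ (dbl i)).val / 2 = (σ (dbl1 i)).val / 2 ∧ (σ (dbl i)).val ≠ (σ (dbl1 i)).val

instance (S : Finset (Fin (2*k))) : DecidablePred (PairOK S) := fun σ => by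
  unfold PairOK; infer_instance

variable (S : Finset (Fin (2*k))) (σ : Equiv.Perm (Fin (2*(2*k))))

lemma slot_cases (hσ : PairOK S σ) {i : Fin (2*k)} (hi : i ∈ S) {z : Fin (2*(2*k))}
    (hz : (σ z).val / 2 = (σ (dbl i)).val / 2) : z = dbl i ∨ z = dbl1 i := by
  obtain ⟨h1, h2⟩ := hσ i hi
  have hlt := (σ z).isLt
  have : (σ z).val = (σ (dbl i)).val ∨ (σ z).val = (σ (dbl1 i)).val := by omega
  rcases this with h | h
  · exact Or.inl (σ.injective (Fin.ext h))
  · exact Or.inr (σ.injective (Fin.ext h))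

/-- the pair of `σ(2i)` -/
def hf : Fin (2*k) → Fin (2*k) := fun i => half (σ (dbl i))

lemma hf_injOn (hσ : PairOK S σ) : Set.InjOn (hf σ) S := by
  intro i hi i' hi' h
  have hz : (σ (dbl i')).val / 2 = (σ (dbl i)).val / 2 := congrArg Fin.val h.symm
  rcases slot_cases S σ hσ hi hz with h' | h'
  · have := congrArg Fin.val h'
    simp only [dbl] at this
    exact Fin.ext (by omega)
  · have := congrArg Fin.val h'
    simp only [dbl, dbl1] at this
    omega

/-- recovered `J` -/
def recJ : Finset (Fin (2*k)) := S.image (hf σ)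

lemma card_recJ (hσ : PairOK S σ) : (recJ S σ).card = S.card :=
  Finset.card_image_of_injOn (hf_injOn S σ hσ)

lemma mem_recJ_iff (u : Fin (2*k)) : u ∈ recJ S σ ↔ ∃ i ∈ S, hf σ i = u := by
  simp [recJ]

/-- recovered `π` -/
noncomputable def recπ (hσ : PairOK S σ) : Equiv.Perm (Fin S.card) :=
  Equiv.ofBijective
    (fun j => finCongr (card_recJ S σ hσ)
      (idxOf (recJ S σ) (hf σ (elt S j)) (Finset.mem_image_of_mem _ (elt_mem S j))))
    (by
      rw [← Finite.injective_iff_bijective]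
      intro j j' h
      have h2 : idxOf (recJ S σ) (hf σ (elt S j)) (Finset.mem_image_of_mem _ (elt_mem S j))
          = idxOf (recJ S σ) (hf σ (elt S j')) (Finset.mem_image_of_mem _ (elt_mem S j')) :=
        Fin.ext (by simpa using congrArg Fin.val h)
      have h3 : hf σ (elt S j) = hf σ (elt S j') := by
        rw [← elt_idxOf (recJ S σ) (hf σ (elt S j)) (Finset.mem_image_of_mem _ (elt_mem S j)),
          ← elt_idxOf (recJ S σ) (hf σ (elt S j')) (Finset.mem_image_of_mem _ (elt_mem S j')), h2]
      exact elt_injective S (hf_injOn S σ hσ (elt_mem S j) (elt_mem S j') h3))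

lemma elt_recπ (hσ : PairOK S σ) (j : Fin S.card) :
    elt (recJ S σ) (finCongr (card_recJ S σ hσ).symm (recπ S σ hσ j)) = hf σ (elt S j) := by
  have h : finCongr (card_recJ S σ hσ).symm (recπ S σ hσ j)
      = idxOf (recJ S σ) (hf σ (elt S j)) (Finset.mem_image_of_mem _ (elt_mem S j)) :=
    Fin.ext rfl
  rw [h]; exact elt_idxOf _ _ _

/-- recovered `ε` -/
def recε : Fin S.card → Bool := fun j => decide ((σ (dbl (elt S j))).val % 2 = 1)

lemma mem_compl_recJ (hσ : PairOK S σ) (x : Fin (2*Sᶜ.card)) :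
    half (σ (pairEmb Sᶜ x)) ∈ (recJ S σ)ᶜ := by
  rw [Finset.mem_compl]
  intro hmem
  rw [mem_recJ_iff] at hmem
  obtain ⟨i, hi, hfi⟩ := hmem
  have hz : (σ (pairEmb Sᶜ x)).val / 2 = (σ (dbl i)).val / 2 := by
    have := congrArg Fin.val hfi
    simp only [hf, half] at this ⊢
    omega
  rcases slot_cases S σ hσ hi hz with h' | h'
  · have h1 := half_pairEmb_mem Sᶜ x
    rw [h', half_dbl] at h1
    exact (Finset.mem_compl.mp h1) hi
  · have h1 := half_pairEmb_mem Sᶜ x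
    rw [h', half_dbl1] at h1
    exact (Finset.mem_compl.mp h1) hi

lemma card_compl_recJ (hσ : PairOK S σ) : 2*((recJ S σ)ᶜ).card = 2*(Sᶜ).card := by
  have h1 := card_compl_pair S
  have h2 := card_compl_pair (recJ S σ)
  have := card_recJ S σ hσ
  omega

/-- recovered `b` -/
noncomputable def recb (hσ : PairOK S σ) : Equiv.Perm (Fin (2*Sᶜ.card)) :=
  Equiv.ofBijective
    (fun x => finCongr (card_compl_recJ S σ hσ)
      ⟨2 * (idxOf ((recJ S σ)ᶜ) (half (σ (pairEmb Sᶜ x))) (mem_compl_recJ S σ hσ x)).val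
          + (σ (pairEmb Sᶜ x)).val % 2,
        by have := (idxOf ((recJ S σ)ᶜ) (half (σ (pairEmb Sᶜ x))) (mem_compl_recJ S σ hσ x)).isLt; omega⟩)
    (by
      rw [← Finite.injective_iff_bijective]
      intro x x' h
      have hv := congrArg Fin.val h
      simp only [finCongr_apply, Fin.coe_cast] at hv
      have hidx : (idxOf ((recJ S σ)ᶜ) (half (σ (pairEmb Sᶜ x))) (mem_compl_recJ S σ hσ x)).val
          = (idxOf ((recJ S σ)ᶜ) (half (σ (pairEmb Sᶜ x'))) (mem_compl_recJ S σ hσ x')).val ∧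
          (σ (pairEmb Sᶜ x)).val % 2 = (σ (pairEmb Sᶜ x')).val % 2 := by
        constructor <;> omega
      have h1 : half (σ (pairEmb Sᶜ x)) = half (σ (pairEmb Sᶜ x')) := by
        rw [← elt_idxOf ((recJ S σ)ᶜ) (half (σ (pairEmb Sᶜ x))) (mem_compl_recJ S σ hσ x),
          ← elt_idxOf ((recJ S σ)ᶜ) (half (σ (pairEmb Sᶜ x'))) (mem_compl_recJ S σ hσ x')]
        exact congrArg _ (Fin.ext hidx.1)
      have h2 : (σ (pairEmb Sᶜ x)).val = (σ (pairEmb Sᶜ x')).val := by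
        have := congrArg Fin.val h1
        simp only [half] at this
        omega
      exact pairEmb_injective Sᶜ (σ.injective (Fin.ext h2)))

end Stage7
section Stage7b
variable {k : ℕ} (S : Finset (Fin (2*k)))

lemma pairOK_build (J : Finset (Fin (2*k))) (hJS : J.card = S.card)
    (π : Equiv.Perm (Fin S.card)) (ε : Fin S.card → Bool) (b : Equiv.Perm (Fin (2*Sᶜ.card))) :
    PairOK S (buildPerm S J hJS π ε b) := by
  intro i hi
  have hie : i = elt S (idxOf S i hi) := (elt_idxOf S i hi).symm
  set j := idxOf S i hi
  rw [hie, dbl_elt, dbl1_elt, buildPerm_left, buildPerm_left]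
  set u := finCongr (by rw [hJS] : 2*S.card = 2*J.card) (midPerm π ε (dbl j)) with hu
  set v := finCongr (by rw [hJS] : 2*S.card = 2*J.card) (midPerm π ε (dbl1 j)) with hv
  have huv : u.val = 2 * (π j).val + (if ε j then 1 else 0) := midPerm_dbl_val S π ε j
  have hvv : v.val = 2 * (π j).val + (if ε j then 0 else 1) := midPerm_dbl1_val S π ε j
  have h1 : (pairEmb J u).val = 2 * (elt J (half u)).val + u.val % 2 := pairEmb_val J u
  have h2 : (pairEmb J v).val = 2 * (elt J (half v)).val + v.val % 2 := pairEmb_val J v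
  have heq : half u = half v := by
    apply Fin.ext
    show u.val / 2 = v.val / 2
    by_cases h : ε j <;> simp [h] at huv hvv <;> omega
  rw [heq] at h1
  constructor
  · by_cases h : ε j <;> simp [h] at huv hvv <;> omega
  · by_cases h : ε j <;> simp [h] at huv hvv <;> omega

lemma build_rec (σ : Equiv.Perm (Fin (2*(2*k)))) (hσ : PairOK S σ) :
    buildPerm S (recJ S σ) (card_recJ S σ hσ) (recπ S σ hσ) (recε S σ) (recb S σ hσ) = σ := by
  apply Equiv.ext
  intro y
  obtain ⟨v, rfl⟩ := (ET S).surjective y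
  match v with
  | .inl x =>
    rw [ET_inl, buildPerm_left]
    apply Fin.ext
    show (pairEmb (recJ S σ) (finCongr (by rw [card_recJ S σ hσ] : 2*S.card = 2*(recJ S σ).card)
        ((midPerm (recπ S σ hσ) (recε S σ)) x))).val = (σ (pairEmb S x)).val
    have hwval : (finCongr (by rw [card_recJ S σ hσ] : 2*S.card = 2*(recJ S σ).card)
          ((midPerm (recπ S σ hσ) (recε S σ)) x)).val
        = 2 * ((recπ S σ hσ) (half x)).val
          + (if recε S σ (half x) then 1 - x.val % 2 else x.val % 2) :=
      midPerm_val (recπ S σ hσ) (recε S σ) x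
    have hbit : (if recε S σ (half x) then 1 - x.val % 2 else x.val % 2) ≤ 1 := by
      by_cases h : recε S σ (half x) <;> simp [h] <;> omega
    have hhw : half (finCongr (by rw [card_recJ S σ hσ] : 2*S.card = 2*(recJ S σ).card)
          ((midPerm (recπ S σ hσ) (recε S σ)) x))
        = finCongr (card_recJ S σ hσ).symm ((recπ S σ hσ) (half x)) := by
      apply Fin.ext
      show (finCongr (by rw [card_recJ S σ hσ] : 2*S.card = 2*(recJ S σ).card)
          ((midPerm (recπ S σ hσ) (recε S σ)) x)).val / 2 = ((recπ S σ hσ) (half x)).val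
      omega
    have h1 := pairEmb_val (recJ S σ)
      (finCongr (by rw [card_recJ S σ hσ] : 2*S.card = 2*(recJ S σ).card)
        ((midPerm (recπ S σ hσ) (recε S σ)) x))
    rw [h1, hhw, elt_recπ]
    -- now the goal LHS is 2 * (hf σ (elt S (half x))).val + (...)%2
    have hfv : (hf σ (elt S (half x))).val = (σ (dbl (elt S (half x)))).val / 2 := rfl
    have hεv : (if recε S σ (half x) then 1 else 0) = (σ (dbl (elt S (half x)))).val % 2 := by
      have hd : recε S σ (half x) = decide ((σ (dbl (elt S (half x)))).val % 2 = 1) := rfl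
      by_cases h : (σ (dbl (elt S (half x)))).val % 2 = 1
      · rw [hd]; simp [h]
      · rw [hd]; simp [h]; omega
    have hpx : (pairEmb S x).val = 2 * (elt S (half x)).val + x.val % 2 := pairEmb_val S x
    have hx2 : x.val % 2 = 0 ∨ x.val % 2 = 1 := by omega
    rcases hx2 with hr | hr
    · have hx : pairEmb S x = dbl (elt S (half x)) := by
        apply Fin.ext
        show (pairEmb S x).val = 2 * (elt S (half x)).val
        omega
      rw [hx]
      have hdecomp : (σ (dbl (elt S (half x)))).val
          = 2 * ((σ (dbl (elt S (half x)))).val / 2) + (σ (dbl (elt S (half x)))).val % 2 := by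
        omega
      by_cases h : recε S σ (half x) <;> simp [h] at hεv hwval ⊢ <;> omega
    · have hx : pairEmb S x = dbl1 (elt S (half x)) := by
        apply Fin.ext
        show (pairEmb S x).val = 2 * (elt S (half x)).val + 1
        omega
      rw [hx]
      obtain ⟨hp1, hp2⟩ := hσ (elt S (half x)) (elt_mem S (half x))
      have hlt := (σ (dbl1 (elt S (half x)))).isLt
      have hdecomp : (σ (dbl1 (elt S (half x)))).val
          = 2 * ((σ (dbl (elt S (half x)))).val / 2) + (1 - (σ (dbl (elt S (half x)))).val % 2) := by
        omega
      by_cases h : recε S σ (half x) <;> simp [h] at hεv hwval ⊢ <;> omega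
  | .inr x =>
    rw [ET_inr, buildPerm_right]
    apply Fin.ext
    show (pairEmb ((recJ S σ)ᶜ) (finCongr (by rw [compl_card_eq S (recJ S σ) (card_recJ S σ hσ)] :
        2*Sᶜ.card = 2*(recJ S σ)ᶜ.card) ((recb S σ hσ) x))).val = (σ (pairEmb Sᶜ x)).val
    have hbv : ((recb S σ hσ) x).val
        = 2 * (idxOf ((recJ S σ)ᶜ) (half (σ (pairEmb Sᶜ x))) (mem_compl_recJ S σ hσ x)).val
          + (σ (pairEmb Sᶜ x)).val % 2 := rfl
    have hhw : half (finCongr (by rw [compl_card_eq S (recJ S σ) (card_recJ S σ hσ)] :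
          2*Sᶜ.card = 2*(recJ S σ)ᶜ.card) ((recb S σ hσ) x))
        = idxOf ((recJ S σ)ᶜ) (half (σ (pairEmb Sᶜ x))) (mem_compl_recJ S σ hσ x) := by
      apply Fin.ext
      show ((recb S σ hσ) x).val / 2 = _
      omega
    have h1 := pairEmb_val ((recJ S σ)ᶜ)
      (finCongr (by rw [compl_card_eq S (recJ S σ) (card_recJ S σ hσ)] :
        2*Sᶜ.card = 2*(recJ S σ)ᶜ.card) ((recb S σ hσ) x))
    rw [h1, hhw, elt_idxOf]
    show 2 * ((σ (pairEmb Sᶜ x)).val / 2) + ((recb S σ hσ) x).val % 2 = (σ (pairEmb Sᶜ x)).val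
    omega

lemma buildPerm_left_val (J : Finset (Fin (2*k))) (hJS : J.card = S.card)
    (π : Equiv.Perm (Fin S.card)) (ε : Fin S.card → Bool) (b : Equiv.Perm (Fin (2*Sᶜ.card)))
    (x : Fin (2*S.card)) :
    (buildPerm S J hJS π ε b (pairEmb S x)).val
      = 2 * (elt J ⟨(midPerm π ε x).val / 2,
          by have := (midPerm π ε x).isLt; omega⟩).val + (midPerm π ε x).val % 2 := by
  rw [buildPerm_left]; rfl

lemma buildPerm_right_val (J : Finset (Fin (2*k))) (hJS : J.card = S.card)
    (π : Equiv.Perm (Fin S.card)) (ε : Fin S.card → Bool) (b : Equiv.Perm (Fin (2*Sᶜ.card)))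
    (x : Fin (2*Sᶜ.card)) :
    (buildPerm S J hJS π ε b (pairEmb Sᶜ x)).val
      = 2 * (elt Jᶜ ⟨(b x).val / 2,
          by have := (b x).isLt; have := compl_card_eq S J hJS; omega⟩).val + (b x).val % 2 := by
  rw [buildPerm_right]; rfl

lemma build_inj (J J' : Finset (Fin (2*k))) (hJ : J.card = S.card) (hJ' : J'.card = S.card)
    (π π' : Equiv.Perm (Fin S.card)) (ε ε' : Fin S.card → Bool)
    (b b' : Equiv.Perm (Fin (2*Sᶜ.card)))
    (h : buildPerm S J hJ π ε b = buildPerm S J' hJ' π' ε' b') :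
    J = J' ∧ π = π' ∧ ε = ε' ∧ b = b' := by
  have hJdet : ∀ (J₀ : Finset (Fin (2*k))) (hJ₀ : J₀.card = S.card) π₀ ε₀ b₀,
      J₀ = recJ S (buildPerm S J₀ hJ₀ π₀ ε₀ b₀) := by
    intro J₀ hJ₀ π₀ ε₀ b₀
    set σ := buildPerm S J₀ hJ₀ π₀ ε₀ b₀ with hσdef
    have hOK := pairOK_build S J₀ hJ₀ π₀ ε₀ b₀
    have hsub : recJ S σ ⊆ J₀ := by
      intro u hu
      rw [mem_recJ_iff] at hu
      obtain ⟨i, hi, hfi⟩ := hu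
      have hie : i = elt S (idxOf S i hi) := (elt_idxOf S i hi).symm
      set j := idxOf S i hi
      have hh : hf σ i = half (σ (dbl i)) := rfl
      rw [← hfi, hh, hie, dbl_elt, hσdef, buildPerm_left, half_pairEmb]
      exact elt_mem J₀ _
    have hcard : J₀.card ≤ (recJ S σ).card := by
      rw [card_recJ S σ hOK, hJ₀]
    exact ((Finset.eq_of_subset_of_card_le hsub hcard)).symm
  have hJJ : J = J' := by
    rw [hJdet J hJ π ε b, hJdet J' hJ' π' ε' b', h]
  subst hJJ
  have hπε : ∀ j : Fin S.card, π j = π' j ∧ ε j = ε' j := by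
    intro j
    have h1 := congrArg (fun σ => (σ (pairEmb S (dbl j))).val) h
    simp only [buildPerm_left_val] at h1
    have hu := midPerm_dbl_val S π ε j
    have hv := midPerm_dbl_val S π' ε' j
    have hb1 : (if ε j then 1 else 0) ≤ 1 := by by_cases hh : ε j <;> simp [hh]
    have hb2 : (if ε' j then 1 else 0) ≤ 1 := by by_cases hh : ε' j <;> simp [hh]
    have helt : (elt J ⟨(midPerm π ε (dbl j)).val / 2,
          by have := (midPerm π ε (dbl j)).isLt; omega⟩).val
        = (elt J ⟨(midPerm π' ε' (dbl j)).val / 2,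
          by have := (midPerm π' ε' (dbl j)).isLt; omega⟩).val ∧
        (midPerm π ε (dbl j)).val % 2 = (midPerm π' ε' (dbl j)).val % 2 := by
      constructor <;> omega
    have heq := elt_injective J (Fin.ext helt.1)
    have hdiv : (midPerm π ε (dbl j)).val / 2 = (midPerm π' ε' (dbl j)).val / 2 := by
      have := congrArg Fin.val heq
      exact this
    have hmod := helt.2
    constructor
    · exact Fin.ext (by omega)
    · by_cases hε : ε j <;> by_cases hε' : ε' j <;>
        simp [hε, hε'] at hu hv ⊢ <;> omega
  have hb : ∀ x, b x = b' x := by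
    intro x
    have h1 := congrArg (fun σ => (σ (pairEmb Sᶜ x)).val) h
    simp only [buildPerm_right_val] at h1
    have hlt := (b x).isLt
    have hlt' := (b' x).isLt
    have helt : (elt Jᶜ ⟨(b x).val / 2,
          by have := (b x).isLt; have := compl_card_eq S J hJ; omega⟩).val
        = (elt Jᶜ ⟨(b' x).val / 2,
          by have := (b' x).isLt; have := compl_card_eq S J hJ'; omega⟩).val ∧
        (b x).val % 2 = (b' x).val % 2 := by
      constructor <;> omega
    have heq := elt_injective Jᶜ (Fin.ext helt.1)
    have hdiv : (b x).val / 2 = (b' x).val / 2 := congrArg Fin.val heq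
    exact Fin.ext (by omega)
  exact ⟨rfl, Equiv.ext fun j => (hπε j).1, funext fun j => (hπε j).2, Equiv.ext hb⟩
end Stage7b
section Stage8
variable {k : ℕ}

/-- unnormalized pfaffian sum of the `I`-submatrix of `A` -/
noncomputable def GSum (A : Matrix (Fin (2*(2*k))) (Fin (2*(2*k))) ℝ)
    (I : Finset (Fin (2*k))) : ℝ :=
  ∑ c : Equiv.Perm (Fin (2*I.card)), ((Equiv.Perm.sign c : ℤ) : ℝ) *
    ∏ j : Fin I.card, A (pairEmb I (c (dbl j))) (pairEmb I (c (dbl1 j)))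

noncomputable def innerTerm (A : Matrix (Fin (2*(2*k))) (Fin (2*(2*k))) ℝ)
    (S J : Finset (Fin (2*k))) (b : Equiv.Perm (Fin (2*Sᶜ.card))) : ℝ :=
  if h : J.card = S.card then
    ((Equiv.Perm.sign b : ℤ) : ℝ) * ∏ j : Fin Sᶜ.card,
      A (pairEmb Jᶜ (finCongr (by rw [compl_card_eq S J h]) (b (dbl j))))
        (pairEmb Jᶜ (finCongr (by rw [compl_card_eq S J h]) (b (dbl1 j))))
  else 0

lemma sum_innerTerm (A : Matrix (Fin (2*(2*k))) (Fin (2*(2*k))) ℝ)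
    (S J : Finset (Fin (2*k))) (h : J.card = S.card) :
    ∑ b : Equiv.Perm (Fin (2*Sᶜ.card)), innerTerm A S J b = GSum A Jᶜ := by
  have h2 : 2*Sᶜ.card = 2*Jᶜ.card := by rw [compl_card_eq S J h]
  have hc : Sᶜ.card = Jᶜ.card := by rw [compl_card_eq S J h]
  refine Fintype.sum_equiv ((finCongr h2).permCongr) _ _ fun b => ?_
  rw [innerTerm, dif_pos h]
  congr 1
  · rw [Equiv.Perm.sign_permCongr]
  · refine Fintype.prod_equiv (finCongr hc) _ _ fun j => ?_
    have e1 : ((finCongr h2).permCongr b) (dbl (finCongr hc j)) = finCongr h2 (b (dbl j)) := by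
      rw [Equiv.permCongr_apply]
      congr 1
    have e2 : ((finCongr h2).permCongr b) (dbl1 (finCongr hc j)) = finCongr h2 (b (dbl1 j)) := by
      rw [Equiv.permCongr_apply]
      congr 1
    rw [e1, e2]

lemma sum_filter_perm (A : Matrix (Fin (2*(2*k))) (Fin (2*(2*k))) ℝ)
    (S : Finset (Fin (2*k))) :
    ∑ σ ∈ Finset.univ.filter (PairOK S),
      ((Equiv.Perm.sign σ : ℤ) : ℝ) *
        ((∏ i ∈ S, Yblock k (σ (dbl i)) (σ (dbl1 i)))
          * ∏ i ∈ Sᶜ, A (σ (dbl i)) (σ (dbl1 i)))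
    = ∑ σ : Equiv.Perm (Fin (2*(2*k))),
      ((Equiv.Perm.sign σ : ℤ) : ℝ) *
        ((∏ i ∈ S, Yblock k (σ (dbl i)) (σ (dbl1 i)))
          * ∏ i ∈ Sᶜ, A (σ (dbl i)) (σ (dbl1 i))) := by
  refine Finset.sum_filter_of_ne fun σ _ hne => ?_
  by_contra hP
  apply hne
  unfold PairOK at hP
  push_neg at hP
  obtain ⟨i, hi, hcond⟩ := hP
  have hY : Yblock k (σ (dbl i)) (σ (dbl1 i)) = 0 := by
    apply Yblock_eq_zero
    intro ⟨h1, h2⟩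
    exact h2 (hcond h1)
  rw [Finset.prod_eq_zero hi hY, zero_mul, mul_zero]

lemma inner_bij (A : Matrix (Fin (2*(2*k))) (Fin (2*(2*k))) ℝ)
    (S : Finset (Fin (2*k))) :
    ∑ σ ∈ Finset.univ.filter (PairOK S),
      ((Equiv.Perm.sign σ : ℤ) : ℝ) *
        ((∏ i ∈ S, Yblock k (σ (dbl i)) (σ (dbl1 i)))
          * ∏ i ∈ Sᶜ, A (σ (dbl i)) (σ (dbl1 i)))
    = ∑ d ∈ (Finset.powersetCard S.card Finset.univ) ×ˢ
        (Finset.univ : Finset (Equiv.Perm (Fin S.card) × (Fin S.card → Bool)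
          × Equiv.Perm (Fin (2*Sᶜ.card)))),
        innerTerm A S d.1 d.2.2.2 := by
  refine (Finset.sum_bij
    (fun d hd => buildPerm S d.1
      (Finset.mem_powersetCard_univ.mp (Finset.mem_product.mp hd).1) d.2.1 d.2.2.1 d.2.2.2)
    ?_ ?_ ?_ ?_).symm
  · intro d hd
    rw [Finset.mem_filter]
    exact ⟨Finset.mem_univ _, pairOK_build S d.1 _ d.2.1 d.2.2.1 d.2.2.2⟩
  · rintro ⟨J1, π1, ε1, b1⟩ h1 ⟨J2, π2, ε2, b2⟩ h2 heq
    obtain ⟨hJ, hπ, hε, hb⟩ := build_inj S J1 J2 _ _ π1 π2 ε1 ε2 b1 b2 heq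
    simp only [Prod.mk.injEq]
    exact ⟨hJ, hπ, hε, hb⟩
  · intro σ hσmem
    have hσ := (Finset.mem_filter.mp hσmem).2
    refine ⟨⟨recJ S σ, recπ S σ hσ, recε S σ, recb S σ hσ⟩, ?_, ?_⟩
    · rw [Finset.mem_product]
      exact ⟨Finset.mem_powersetCard_univ.mpr (card_recJ S σ hσ), Finset.mem_univ _⟩
    · exact build_rec S σ hσ
  · rintro ⟨J, π, ε, b⟩ hd
    have hJ : J.card = S.card := Finset.mem_powersetCard_univ.mp (Finset.mem_product.mp hd).1
    show innerTerm A S J b = _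
    rw [innerTerm, dif_pos hJ]
    exact (term_build S J hJ π ε b A).symm

set_option maxHeartbeats 1000000 in
lemma inner_prod_eval (A : Matrix (Fin (2*(2*k))) (Fin (2*(2*k))) ℝ)
    (S : Finset (Fin (2*k))) :
    ∑ d ∈ (Finset.powersetCard S.card Finset.univ) ×ˢ
        (Finset.univ : Finset (Equiv.Perm (Fin S.card) × (Fin S.card → Bool)
          × Equiv.Perm (Fin (2*Sᶜ.card)))),
        innerTerm A S d.1 d.2.2.2
    = ∑ J ∈ Finset.powersetCard S.card Finset.univ,
        ((S.card.factorial : ℝ) * 2^S.card) * GSum A Jᶜ := by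
  rw [Finset.sum_product]
  refine Finset.sum_congr rfl fun J hJmem => ?_
  have hJ : J.card = S.card := Finset.mem_powersetCard_univ.mp hJmem
  have h1 : ∑ z : (Equiv.Perm (Fin S.card) × (Fin S.card → Bool)
      × Equiv.Perm (Fin (2*Sᶜ.card))), innerTerm A S J z.2.2
      = ∑ _π : Equiv.Perm (Fin S.card), ∑ w : (Fin S.card → Bool)
          × Equiv.Perm (Fin (2*Sᶜ.card)), innerTerm A S J w.2 :=
    Fintype.sum_prod_type _
  have h2 : ∀ _π : Equiv.Perm (Fin S.card),
      ∑ w : (Fin S.card → Bool) × Equiv.Perm (Fin (2*Sᶜ.card)), innerTerm A S J w.2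
      = ∑ _ε : Fin S.card → Bool, ∑ b, innerTerm A S J b :=
    fun _ => Fintype.sum_prod_type _
  have h3 : ∑ z : (Equiv.Perm (Fin S.card) × (Fin S.card → Bool)
      × Equiv.Perm (Fin (2*Sᶜ.card))), innerTerm A S J z.2.2
      = ∑ _π : Equiv.Perm (Fin S.card), ∑ _ε : Fin S.card → Bool, GSum A Jᶜ := by
    rw [h1]
    refine Finset.sum_congr rfl fun π _ => ?_
    rw [h2 π]
    exact Finset.sum_congr rfl fun ε _ => sum_innerTerm A S J hJ
  rw [h3, Finset.sum_const, Finset.sum_const, Finset.card_univ, Finset.card_univ,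
    Fintype.card_perm, Fintype.card_fun, Fintype.card_fin, Fintype.card_bool,
    smul_smul, nsmul_eq_mul]
  push_cast
  ring
end Stage8
section Stage9
variable {k : ℕ}

lemma GSum_pfaffian (A : Matrix (Fin (2*(2*k))) (Fin (2*(2*k))) ℝ) (I : Finset (Fin (2*k))) :
    GSum A I = (2:ℝ)^I.card * (I.card.factorial : ℝ)
      * pfaffian (n := I.card) (fun i j => A (pairEmb I i) (pairEmb I j)) := by
  have hr : pfaffian (n := I.card) (fun i j => A (pairEmb I i) (pairEmb I j))
      = (1 / ((2:ℝ)^I.card * I.card.factorial)) * GSum A I := rfl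
  have hne : ((2:ℝ)^I.card * I.card.factorial) ≠ 0 := by positivity
  rw [hr]
  field_simp

lemma powersetCard_univ_filter (m : ℕ) :
    Finset.powersetCard m (Finset.univ : Finset (Fin (2*k)))
      = Finset.univ.filter (fun J : Finset (Fin (2*k)) => J.card = m) := by
  ext J
  simp [Finset.mem_powersetCard_univ]

lemma main_sum (A : Matrix (Fin (2*(2*k))) (Fin (2*(2*k))) ℝ) :
    ∑ σ : Equiv.Perm (Fin (2*(2*k))), ((Equiv.Perm.sign σ : ℤ) : ℝ) *
        ∏ i : Fin (2*k), (Yblock k + A) (σ (dbl i)) (σ (dbl1 i))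
    = ∑ J : Finset (Fin (2*k)),
        (((2*k).choose J.card : ℝ) * ((J.card.factorial : ℝ) * 2^J.card)) * GSum A Jᶜ := by
  have hexp : ∀ σ : Equiv.Perm (Fin (2*(2*k))),
      ∏ i : Fin (2*k), (Yblock k + A) (σ (dbl i)) (σ (dbl1 i))
      = ∑ t : Finset (Fin (2*k)),
          (∏ i ∈ t, Yblock k (σ (dbl i)) (σ (dbl1 i)))
            * ∏ i ∈ tᶜ, A (σ (dbl i)) (σ (dbl1 i)) := by
    intro σ
    rw [← Fintype.prod_add]
    exact Finset.prod_congr rfl fun i _ => rfl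
  calc ∑ σ : Equiv.Perm (Fin (2*(2*k))), ((Equiv.Perm.sign σ : ℤ) : ℝ) *
        ∏ i : Fin (2*k), (Yblock k + A) (σ (dbl i)) (σ (dbl1 i))
      = ∑ σ : Equiv.Perm (Fin (2*(2*k))), ∑ t : Finset (Fin (2*k)),
          ((Equiv.Perm.sign σ : ℤ) : ℝ) *
            ((∏ i ∈ t, Yblock k (σ (dbl i)) (σ (dbl1 i)))
              * ∏ i ∈ tᶜ, A (σ (dbl i)) (σ (dbl1 i))) := by
        refine Finset.sum_congr rfl fun σ _ => ?_
        rw [hexp σ, Finset.mul_sum]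
    _ = ∑ t : Finset (Fin (2*k)), ∑ σ : Equiv.Perm (Fin (2*(2*k))),
          ((Equiv.Perm.sign σ : ℤ) : ℝ) *
            ((∏ i ∈ t, Yblock k (σ (dbl i)) (σ (dbl1 i)))
              * ∏ i ∈ tᶜ, A (σ (dbl i)) (σ (dbl1 i))) := Finset.sum_comm
    _ = ∑ t : Finset (Fin (2*k)), ∑ J ∈ Finset.powersetCard t.card Finset.univ,
          ((t.card.factorial : ℝ) * 2^t.card) * GSum A Jᶜ := by
        refine Finset.sum_congr rfl fun t _ => ?_
        rw [← sum_filter_perm A t, inner_bij A t, inner_prod_eval A t]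
    _ = ∑ t : Finset (Fin (2*k)), ∑ J : Finset (Fin (2*k)),
          (if J.card = t.card then ((J.card.factorial : ℝ) * 2^J.card) * GSum A Jᶜ else 0) := by
        refine Finset.sum_congr rfl fun t _ => ?_
        have hstep : ∑ J ∈ Finset.powersetCard t.card Finset.univ,
            ((t.card.factorial : ℝ) * 2^t.card) * GSum A Jᶜ
          = ∑ J ∈ Finset.powersetCard t.card Finset.univ,
            ((J.card.factorial : ℝ) * 2^J.card) * GSum A Jᶜ :=
          Finset.sum_congr rfl fun J hJ => by rw [Finset.mem_powersetCard_univ.mp hJ]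
        rw [hstep, powersetCard_univ_filter, Finset.sum_filter]
    _ = ∑ J : Finset (Fin (2*k)), ∑ t : Finset (Fin (2*k)),
          (if J.card = t.card then ((J.card.factorial : ℝ) * 2^J.card) * GSum A Jᶜ else 0) :=
        Finset.sum_comm
    _ = ∑ J : Finset (Fin (2*k)),
          (((2*k).choose J.card : ℝ) * ((J.card.factorial : ℝ) * 2^J.card)) * GSum A Jᶜ := by
        refine Finset.sum_congr rfl fun J _ => ?_
        rw [← Finset.sum_filter]
        have hfe : Finset.univ.filter (fun t : Finset (Fin (2*k)) => J.card = t.card)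
            = Finset.powersetCard J.card Finset.univ := by
          ext t
          simp [Finset.mem_powersetCard_univ, eq_comm]
        rw [hfe, Finset.sum_const, Finset.card_powersetCard, Finset.card_univ,
          Fintype.card_fin, nsmul_eq_mul]
        ring

theorem stmt_12 {k : ℕ} (hk : 1 ≤ k)
    (A : Matrix (Fin (2 * (2 * k))) (Fin (2 * (2 * k))) ℝ)
    (hA : A.transpose = -A) :
    pfaffian (n := 2 * k) (Yblock k + A) =
      ∑ I ∈ (Finset.univ : Finset (Fin (2 * k))).powerset,
        pfaffian (n := I.card) (fun i j => A (pairEmb I i) (pairEmb I j)) := by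
  have h0 : pfaffian (n := 2 * k) (Yblock k + A)
      = (1 / ((2:ℝ)^(2*k) * (2*k).factorial)) *
        ∑ σ : Equiv.Perm (Fin (2*(2*k))), ((Equiv.Perm.sign σ : ℤ) : ℝ) *
          ∏ i : Fin (2*k), (Yblock k + A) (σ (dbl i)) (σ (dbl1 i)) := rfl
  have hpf_congr : ∀ (T T' : Finset (Fin (2*k))), T = T' →
      pfaffian (n := T.card) (fun i j => A (pairEmb T i) (pairEmb T j))
      = pfaffian (n := T'.card) (fun i j => A (pairEmb T' i) (pairEmb T' j)) := by
    rintro T T' rfl; rfl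
  rw [h0, main_sum, Finset.mul_sum, Finset.powerset_univ]
  have hre : ∑ I : Finset (Fin (2*k)),
      pfaffian (n := I.card) (fun i j => A (pairEmb I i) (pairEmb I j))
      = ∑ J : Finset (Fin (2*k)),
        pfaffian (n := Jᶜ.card) (fun i j => A (pairEmb Jᶜ i) (pairEmb Jᶜ j)) :=
    Fintype.sum_equiv ⟨fun T => Tᶜ, fun T => Tᶜ, compl_compl, compl_compl⟩ _ _
      (fun I => hpf_congr I _ (compl_compl I).symm)
  rw [hre]
  refine Finset.sum_congr rfl fun J _ => ?_
  rw [GSum_pfaffian]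
  have hm : J.card + Jᶜ.card = 2*k := card_compl_pair J
  have hnat : (2*k).choose J.card * (J.card.factorial * Jᶜ.card.factorial) = (2*k).factorial := by
    have hle : J.card ≤ 2*k := by omega
    have := Nat.choose_mul_factorial_mul_factorial hle
    have hc : Jᶜ.card = 2*k - J.card := by omega
    rw [hc, ← mul_assoc]
    exact this
  have hfr : ((2*k).factorial : ℝ)
      = ((2*k).choose J.card : ℝ) * (J.card.factorial * Jᶜ.card.factorial) := by
    exact_mod_cast hnat.symm
  have h2 : (2:ℝ)^J.card * 2^Jᶜ.card = 2^(2*k) := by rw [← pow_add, hm]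
  have hD : ((2:ℝ)^(2*k) * (2*k).factorial) ≠ 0 := by positivity
  set p := pfaffian (n := Jᶜ.card) (fun i j => A (pairEmb Jᶜ i) (pairEmb Jᶜ j)) with hp
  have hCE : (((2*k).choose J.card : ℝ) * ((J.card.factorial : ℝ) * 2^J.card))
      * ((2:ℝ)^Jᶜ.card * (Jᶜ.card.factorial : ℝ)) = (2:ℝ)^(2*k) * (2*k).factorial := by
    rw [hfr, ← h2]
    ring
  calc (1 / ((2:ℝ)^(2*k) * (2*k).factorial)) *
        ((((2*k).choose J.card : ℝ) * ((J.card.factorial : ℝ) * 2^J.card))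
          * ((2:ℝ)^Jᶜ.card * (Jᶜ.card.factorial : ℝ) * p))
      = ((((2*k).choose J.card : ℝ) * ((J.card.factorial : ℝ) * 2^J.card))
          * ((2:ℝ)^Jᶜ.card * (Jᶜ.card.factorial : ℝ)))
        / ((2:ℝ)^(2*k) * (2*k).factorial) * p := by ring
    _ = p := by rw [hCE, div_self hD, one_mul]
end Stage9
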